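/- Under the hypotheses of the main stability theorem (‖(1/|K|)·∑_{k∈K} f(x+k·y) − g(x) − h(y)‖_β ≤ φ(x,y) and ∑_{k∈K} φ(x+k·x, y+k·y) ≤ (2|K|)^β·L·φ(x,y) with L < 1), the function h satisfies ‖h(x) − q(x) − h(0)‖_β ≤ (1/2^β)·(1/(1−L))·ψ(x,x) + φ(0,x) for all x ∈ E, where q is the unique generalized quadratic solution approximating f and ψ(x,y) = (|K|/|K|^β)·φ(0,y) + (1/|K|^β)·∑_{k∈K}[φ(k·x,y)+φ(k·x,0)]. -/

import Mathlib

set_option maxHeartbeats 1000000 in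
theorem stmt_9
    {E : Type*} [AddCommGroup E] [Module ℝ E]
    {F : Type*} [AddCommGroup F] [Module ℝ F]
    {β : ℝ} (hβ0 : 0 < β) (hβ1 : β ≤ 1)
    (Nb : F → ℝ)
    (hNnn : ∀ z : F, 0 ≤ Nb z)
    (hN0 : ∀ z : F, Nb z = 0 ↔ z = 0)
    (hNs : ∀ (r : ℝ) (z : F), Nb (r • z) = |r| ^ β * Nb z)
    (hNt : ∀ z w : F, Nb (z + w) ≤ Nb z + Nb w)
    (hcomp : ∀ u : ℕ → F,
      (∀ ε : ℝ, 0 < ε → ∃ N, ∀ m ≥ N, ∀ n ≥ N, Nb (u m - u n) < ε) →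
      ∃ l : F, ∀ ε : ℝ, 0 < ε → ∃ N, ∀ n ≥ N, Nb (u n - l) < ε)
    {K : Type*} [CommGroup K] [Fintype K] [DistribMulAction K E]
    (φ : E → E → ℝ) (hφ : ∀ x y, 0 ≤ φ x y)
    (L : ℝ) (hL0 : 0 ≤ L) (hL1 : L < 1)
    (hφcontr : ∀ x y : E,
      (∑ k : K, φ (x + k • x) (y + k • y)) ≤ (2 * (Fintype.card K : ℝ)) ^ β * L * φ x y)
    (f g h : E → F)
    (hfgh : ∀ x y : E,
      Nb ((Fintype.card K : ℝ)⁻¹ • (∑ k : K, f (x + k • y)) - g x - h y) ≤ φ x y)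
    (ψ : E → E → ℝ)
    (hψ : ∀ x y : E, ψ x y =
      (Fintype.card K : ℝ) / (Fintype.card K : ℝ) ^ β * φ 0 y
        + ((Fintype.card K : ℝ) ^ β)⁻¹ * ∑ k : K, (φ (k • x) y + φ (k • x) 0)) :
    ∃ q : E → F,
      (∀ x y : E, (Fintype.card K : ℝ)⁻¹ • (∑ k : K, q (x + k • y)) = q x + q y) ∧
      (∀ x : E, Nb (h x - q x - h 0) ≤ 1 / 2 ^ β * (1 / (1 - L)) * ψ x x + φ 0 x) := by
  classical
  set c : ℝ := (Fintype.card K : ℝ) with hc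
  have hc1 : 1 ≤ c := by
    have : 1 ≤ Fintype.card K := Fintype.card_pos
    rw [hc]; exact_mod_cast this
  have hc0 : 0 < c := lt_of_lt_of_le one_pos hc1
  have hcβ0 : 0 < c ^ β := Real.rpow_pos_of_pos hc0 β
  have h2c0 : 0 < 2 * c := by linarith
  have h2cβ0 : 0 < (2 * c) ^ β := Real.rpow_pos_of_pos h2c0 β
  have h2β0 : 0 < (2 : ℝ) ^ β := Real.rpow_pos_of_pos two_pos β
  have Nb0 : Nb (0 : F) = 0 := (hN0 0).mpr rfl
  have Nbneg : ∀ z : F, Nb (-z) = Nb z := by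
    intro z
    have := hNs (-1) z
    simpa [Real.one_rpow] using this
  have Nbsum : ∀ v : K → F, Nb (∑ k : K, v k) ≤ ∑ k : K, Nb (v k) := by
    intro v
    refine Finset.le_sum_of_subadditive Nb Nb0.le hNt _ _
  have NbsmulNN : ∀ (r : ℝ), 0 ≤ r → ∀ z : F, Nb (r • z) = r ^ β * Nb z := by
    intro r hr z; rw [hNs, abs_of_nonneg hr]
  have Nbsub3 : ∀ a b d : F, Nb (a - b - d) ≤ Nb a + Nb b + Nb d := by
    intro a b d
    calc Nb (a - b - d) ≤ Nb (a - b) + Nb (-d) := by rw [sub_eq_add_neg (a - b)]; exact hNt _ _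
    _ ≤ Nb a + Nb (-b) + Nb d := by
        rw [Nbneg]
        have : Nb (a - b) ≤ Nb a + Nb (-b) := by rw [sub_eq_add_neg]; exact hNt _ _
        linarith
    _ = Nb a + Nb b + Nb d := by rw [Nbneg]
  -- the approximate solution and the operator
  set H : E → F := fun z => c⁻¹ • ∑ k : K, f (k • z) - g 0 - h 0 with hH
  set T : (E → F) → E → F := fun v z => (2 * c)⁻¹ • ∑ j : K, v (z + j • z) with hT
  set D : (E → F) → E → E → F := fun v x y => c⁻¹ • ∑ k : K, v (x + k • y) - v x - v y with hD
  set u : ℕ → E → F := fun n => T^[n] H with hu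
  have hHsum : ∀ z : E, c⁻¹ • ∑ j : K, f (j • z) = H z + g 0 + h 0 := by
    intro z; simp only [hH]; abel
  have psiNN : ∀ x y, 0 ≤ ψ x y := by
    intro x y
    rw [hψ x y]
    have h1 : 0 ≤ c / c ^ β := div_nonneg hc0.le hcβ0.le
    have h2 : (0:ℝ) ≤ ∑ k : K, (φ (k • x) y + φ (k • x) 0) :=
      Finset.sum_nonneg fun k _ => add_nonneg (hφ _ _) (hφ _ _)
    exact add_nonneg (mul_nonneg h1 (hφ 0 y)) (mul_nonneg (inv_nonneg.mpr hcβ0.le) h2)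
  have psicontr : ∀ x y : E,
      ∑ k : K, ψ (x + k • x) (y + k • y) ≤ (2 * c) ^ β * L * ψ x y := by
    intro x y
    have hMnn : 0 ≤ (2 * c) ^ β * L := mul_nonneg h2cβ0.le hL0
    have key0 : ∑ k : K, φ 0 (y + k • y) ≤ (2 * c) ^ β * L * φ 0 y := by
      have := hφcontr 0 y
      simpa using this
    have keyj : ∀ j : K, ∑ k : K, φ (j • (x + k • x)) (y + k • y)
        ≤ (2 * c) ^ β * L * φ (j • x) y := by
      intro j
      have h1 := hφcontr (j • x) y
      have e : ∀ k : K, φ (j • x + k • (j • x)) (y + k • y)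
          = φ (j • (x + k • x)) (y + k • y) := by
        intro k
        congr 1
        rw [smul_add, smul_smul, smul_smul, mul_comm j k]
      calc ∑ k : K, φ (j • (x + k • x)) (y + k • y)
          = ∑ k : K, φ (j • x + k • (j • x)) (y + k • y) :=
            (Finset.sum_congr rfl (fun k _ => e k)).symm
        _ ≤ (2 * c) ^ β * L * φ (j • x) y := h1
    have keyj0 : ∀ j : K, ∑ k : K, φ (j • (x + k • x)) 0
        ≤ (2 * c) ^ β * L * φ (j • x) 0 := by
      intro j
      have h1 := hφcontr (j • x) 0
      simp only [smul_zero, add_zero] at h1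
      have e : ∀ k : K, φ (j • x + k • (j • x)) 0 = φ (j • (x + k • x)) 0 := by
        intro k
        congr 1
        rw [smul_add, smul_smul, smul_smul, mul_comm j k]
      calc ∑ k : K, φ (j • (x + k • x)) 0
          = ∑ k : K, φ (j • x + k • (j • x)) 0 :=
            (Finset.sum_congr rfl (fun k _ => e k)).symm
        _ ≤ (2 * c) ^ β * L * φ (j • x) 0 := h1
    have expand : ∑ k : K, ψ (x + k • x) (y + k • y)
        = c / c ^ β * ∑ k : K, φ 0 (y + k • y)
          + (c ^ β)⁻¹ * ∑ j : K, ((∑ k : K, φ (j • (x + k • x)) (y + k • y))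
            + ∑ k : K, φ (j • (x + k • x)) 0) := by
      simp only [hψ]
      rw [Finset.sum_add_distrib, ← Finset.mul_sum, ← Finset.mul_sum, Finset.sum_comm]
      congr 2
      exact Finset.sum_congr rfl (fun j _ => Finset.sum_add_distrib)
    rw [expand, hψ x y]
    have hAnn : (0:ℝ) ≤ c / c ^ β := div_nonneg hc0.le hcβ0.le
    have hBnn : (0:ℝ) ≤ (c ^ β)⁻¹ := inv_nonneg.mpr hcβ0.le
    have bound2 : ∑ j : K, ((∑ k : K, φ (j • (x + k • x)) (y + k • y))
            + ∑ k : K, φ (j • (x + k • x)) 0)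
        ≤ ∑ j : K, (2 * c) ^ β * L * (φ (j • x) y + φ (j • x) 0) := by
      refine Finset.sum_le_sum fun j _ => ?_
      have := keyj j; have := keyj0 j
      rw [mul_add]; linarith
    calc c / c ^ β * ∑ k : K, φ 0 (y + k • y)
          + (c ^ β)⁻¹ * ∑ j : K, ((∑ k : K, φ (j • (x + k • x)) (y + k • y))
            + ∑ k : K, φ (j • (x + k • x)) 0)
        ≤ c / c ^ β * ((2 * c) ^ β * L * φ 0 y)
          + (c ^ β)⁻¹ * ∑ j : K, (2 * c) ^ β * L * (φ (j • x) y + φ (j • x) 0) :=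
          add_le_add (mul_le_mul_of_nonneg_left key0 hAnn)
            (mul_le_mul_of_nonneg_left bound2 hBnn)
      _ = (2 * c) ^ β * L * (c / c ^ β * φ 0 y
          + (c ^ β)⁻¹ * ∑ k : K, (φ (k • x) y + φ (k • x) 0)) := by
          rw [← Finset.mul_sum]; ring
  have hcinv : ∀ z : F, c⁻¹ • (c • z) = z := by
    intro z; rw [smul_smul, inv_mul_cancel₀ hc0.ne', one_smul]
  have hcard : ∀ z : F, (Fintype.card K) • z = c • z := by
    intro z; rw [hc, Nat.cast_smul_eq_nsmul]
  have e1 : ∀ (x y : E) (j : K),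
      ∑ k : K, f (j • x + k • y) = ∑ k : K, f (j • (x + k • y)) := by
    intro x y j
    refine (Fintype.sum_equiv (Equiv.mulLeft j) _ _ fun k => ?_).symm
    congr 1
    rw [smul_add, smul_smul]
    rfl
  have tstar : ∀ y, Nb (H y + h 0 - h y) ≤ φ 0 y := by
    intro y
    have h1 := hfgh 0 y
    simp only [zero_add] at h1
    have e : c⁻¹ • ∑ k : K, f (k • y) - g 0 - h y = H y + h 0 - h y := by
      rw [hHsum]; abel
    rwa [e] at h1
  have hhH : ∀ x, Nb (h x - h 0 - H x) ≤ φ 0 x := by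
    intro x
    have := tstar x
    rw [← Nbneg]
    have e : -(h x - h 0 - H x) = H x + h 0 - h x := by abel
    rwa [e]
  have star : ∀ x y, Nb (c⁻¹ • ∑ k : K, H (x + k • y) + g 0 + h 0
      - c⁻¹ • ∑ j : K, g (j • x) - h y) ≤ (c ^ β)⁻¹ * ∑ j : K, φ (j • x) y := by
    intro x y
    have hNb : Nb (c⁻¹ • ∑ j : K, (c⁻¹ • ∑ k : K, f (j • x + k • y) - g (j • x) - h y))
        ≤ (c ^ β)⁻¹ * ∑ j : K, φ (j • x) y := by
      rw [NbsmulNN _ (inv_nonneg.mpr hc0.le), Real.inv_rpow hc0.le]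
      exact mul_le_mul_of_nonneg_left
        ((Nbsum _).trans (Finset.sum_le_sum fun j _ => hfgh (j • x) y))
        (inv_nonneg.mpr hcβ0.le)
    refine le_trans (le_of_eq ?_) hNb
    congr 1
    simp only [e1, hH]
    simp only [Finset.sum_sub_distrib, Finset.sum_const, smul_sub, hcard, hcinv,
      Finset.smul_sum, Finset.card_univ, smul_smul]
    rw [Finset.sum_comm]
    abel
  have dstar : ∀ x, Nb (H x + g 0 + h 0 - c⁻¹ • ∑ j : K, g (j • x) - h 0)
      ≤ (c ^ β)⁻¹ * ∑ j : K, φ (j • x) 0 := by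
    intro x
    have hterm : ∀ j : K, Nb (f (j • x) - g (j • x) - h 0) ≤ φ (j • x) 0 := by
      intro j
      have h1 := hfgh (j • x) 0
      have e : c⁻¹ • ∑ k : K, f (j • x + k • (0:E)) = f (j • x) := by
        simp only [smul_zero, add_zero, Finset.sum_const, Finset.card_univ, hcard, hcinv]
      rwa [e] at h1
    have hNb : Nb (c⁻¹ • ∑ j : K, (f (j • x) - g (j • x) - h 0))
        ≤ (c ^ β)⁻¹ * ∑ j : K, φ (j • x) 0 := by
      rw [NbsmulNN _ (inv_nonneg.mpr hc0.le), Real.inv_rpow hc0.le]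
      exact mul_le_mul_of_nonneg_left
        ((Nbsum _).trans (Finset.sum_le_sum fun j _ => hterm j))
        (inv_nonneg.mpr hcβ0.le)
    refine le_trans (le_of_eq ?_) hNb
    congr 1
    simp only [Finset.sum_sub_distrib, Finset.sum_const, smul_sub, hcard, hcinv,
      Finset.card_univ]
    rw [hHsum]
  have hDH : ∀ x y, Nb (D H x y) ≤ ψ x y := by
    intro x y
    have hPQR : D H x y = (c⁻¹ • ∑ k : K, H (x + k • y) + g 0 + h 0
        - c⁻¹ • ∑ j : K, g (j • x) - h y)
        - (H x + g 0 + h 0 - c⁻¹ • ∑ j : K, g (j • x) - h 0)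
        - (H y + h 0 - h y) := by
      simp only [hD]
      abel
    rw [hPQR]
    have htri := Nbsub3 (c⁻¹ • ∑ k : K, H (x + k • y) + g 0 + h 0
        - c⁻¹ • ∑ j : K, g (j • x) - h y)
        (H x + g 0 + h 0 - c⁻¹ • ∑ j : K, g (j • x) - h 0)
        (H y + h 0 - h y)
    have hs := star x y
    have hd := dstar x
    have ht := tstar y
    have hone : (1:ℝ) ≤ c / c ^ β := by
      rw [le_div_iff₀ hcβ0, one_mul]
      calc c ^ β ≤ c ^ (1:ℝ) := Real.rpow_le_rpow_of_exponent_le hc1 hβ1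
        _ = c := Real.rpow_one c
    have hφy := hφ 0 y
    rw [hψ x y, Finset.sum_add_distrib, mul_add]
    nlinarith [mul_le_mul_of_nonneg_right hone hφy]
  have Tsub : ∀ (v w : E → F) x,
      T v x - T w x = (2 * c)⁻¹ • ∑ j : K, (v (x + j • x) - w (x + j • x)) := by
    intro v w x
    rw [hT]
    simp only [Finset.smul_sum, smul_sub, Finset.sum_sub_distrib]
  have Tcontr : ∀ (v w : E → F) (a : ℝ), 0 ≤ a →
      (∀ z, Nb (v z - w z) ≤ a * ψ z z) →
      ∀ x, Nb (T v x - T w x) ≤ L * a * ψ x x := by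
    intro v w a ha hvw x
    rw [Tsub, NbsmulNN _ (inv_nonneg.mpr h2c0.le), Real.inv_rpow h2c0.le]
    have h1 : Nb (∑ j : K, (v (x + j • x) - w (x + j • x)))
        ≤ a * ∑ j : K, ψ (x + j • x) (x + j • x) := by
      rw [Finset.mul_sum]
      exact (Nbsum _).trans (Finset.sum_le_sum fun j _ => hvw _)
    have h3 := psicontr x x
    calc ((2 * c) ^ β)⁻¹ * Nb (∑ j : K, (v (x + j • x) - w (x + j • x)))
        ≤ ((2 * c) ^ β)⁻¹ * (a * ((2 * c) ^ β * L * ψ x x)) := by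
          refine mul_le_mul_of_nonneg_left
            (h1.trans (mul_le_mul_of_nonneg_left h3 ha)) (inv_nonneg.mpr h2cβ0.le)
      _ = L * a * ψ x x := by field_simp
  have DT : ∀ (v : E → F) x y,
      D (T v) x y = (2 * c)⁻¹ • ∑ j : K, D v (x + j • x) (y + j • y) := by
    intro v x y
    have earg : ∀ (j k : K), (x + k • y) + j • (x + k • y)
        = (x + j • x) + k • (y + j • y) := by
      intro j k
      rw [smul_add, smul_add, smul_smul, smul_smul, mul_comm j k]
      abel
    simp only [hD, hT]
    simp only [earg]
    simp only [Finset.smul_sum, Finset.sum_sub_distrib, smul_sub, smul_smul,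
      mul_comm c⁻¹ (2 * c)⁻¹]
    rw [Finset.sum_comm]
  have Dcontr : ∀ (v : E → F) (a : ℝ), 0 ≤ a →
      (∀ x y, Nb (D v x y) ≤ a * ψ x y) →
      ∀ x y, Nb (D (T v) x y) ≤ L * a * ψ x y := by
    intro v a ha hv x y
    rw [DT, NbsmulNN _ (inv_nonneg.mpr h2c0.le), Real.inv_rpow h2c0.le]
    have h1 : Nb (∑ j : K, D v (x + j • x) (y + j • y))
        ≤ a * ∑ j : K, ψ (x + j • x) (y + j • y) := by
      rw [Finset.mul_sum]
      exact (Nbsum _).trans (Finset.sum_le_sum fun j _ => hv _ _)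
    have h3 := psicontr x y
    calc ((2 * c) ^ β)⁻¹ * Nb (∑ j : K, D v (x + j • x) (y + j • y))
        ≤ ((2 * c) ^ β)⁻¹ * (a * ((2 * c) ^ β * L * ψ x y)) := by
          refine mul_le_mul_of_nonneg_left
            (h1.trans (mul_le_mul_of_nonneg_left h3 ha)) (inv_nonneg.mpr h2cβ0.le)
      _ = L * a * ψ x y := by field_simp
  -- step estimate
  have hstep : ∀ n (x : E), Nb (u (n+1) x - u n x) ≤ (L ^ n * ((2:ℝ) ^ β)⁻¹) * ψ x x := by
    intro n
    induction n with
    | zero =>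
      intro x
      have hid : u 1 x - u 0 x = (2:ℝ)⁻¹ • D H x x := by
        simp only [hu, Function.iterate_one, Function.iterate_zero, id_eq, hD, hT]
        rw [mul_inv]
        module
      rw [hid, NbsmulNN _ (by norm_num), Real.inv_rpow (by norm_num)]
      simpa using mul_le_mul_of_nonneg_left (hDH x x) (inv_nonneg.mpr h2β0.le)
    | succ n ih =>
      intro x
      have hid : u (n+2) x - u (n+1) x = T (u (n+1)) x - T (u n) x := by
        simp only [hu, Function.iterate_succ_apply']
      rw [hid]
      have hb := Tcontr (u (n+1)) (u n) (L ^ n * ((2:ℝ) ^ β)⁻¹)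
        (mul_nonneg (pow_nonneg hL0 n) (inv_nonneg.mpr h2β0.le)) ih x
      calc Nb (T (u (n+1)) x - T (u n) x)
          ≤ L * (L ^ n * ((2:ℝ) ^ β)⁻¹) * ψ x x := hb
        _ = (L ^ (n+1) * ((2:ℝ) ^ β)⁻¹) * ψ x x := by ring
  have hdiff : ∀ m d (x : E), Nb (u (m+d) x - u m x)
      ≤ (∑ i ∈ Finset.range d, L ^ (m+i)) * (((2:ℝ) ^ β)⁻¹ * ψ x x) := by
    intro m d
    induction d with
    | zero => intro x; simp [Nb0]
    | succ d ih =>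
      intro x
      have tri : Nb (u (m+(d+1)) x - u m x)
          ≤ Nb (u (m+d+1) x - u (m+d) x) + Nb (u (m+d) x - u m x) := by
        have := hNt (u (m+d+1) x - u (m+d) x) (u (m+d) x - u m x)
        simpa [sub_add_sub_cancel, show m+(d+1) = m+d+1 from rfl] using this
      have h1 := hstep (m+d) x
      have h2 := ih x
      rw [Finset.sum_range_succ, add_mul]
      have e : (L ^ (m+d) * ((2:ℝ) ^ β)⁻¹) * ψ x x
          = L ^ (m+d) * (((2:ℝ) ^ β)⁻¹ * ψ x x) := by ring
      rw [e] at h1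
      linarith
  have hgeom : ∀ m d, (∑ i ∈ Finset.range d, L ^ (m+i)) ≤ L ^ m * (1-L)⁻¹ := by
    intro m d
    have h1 : ∑ i ∈ Finset.range d, L ^ (m+i) = L ^ m * ∑ i ∈ Finset.range d, L ^ i := by
      rw [Finset.mul_sum]; exact Finset.sum_congr rfl fun i _ => pow_add L m i
    rw [h1]
    refine mul_le_mul_of_nonneg_left ?_ (pow_nonneg hL0 m)
    have h3 : 0 < 1 - L := by linarith
    have h2 : (∑ i ∈ Finset.range d, L ^ i) * (1 - L) ≤ 1 := by
      have := geom_sum_mul L d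
      nlinarith [pow_nonneg hL0 d]
    rw [inv_eq_one_div, le_div_iff₀ h3]
    exact h2
  have Bnn : ∀ x : E, 0 ≤ ((2:ℝ) ^ β)⁻¹ * ψ x x :=
    fun x => mul_nonneg (inv_nonneg.mpr h2β0.le) (psiNN x x)
  have hbnd : ∀ (x : E) m n, m ≤ n →
      Nb (u n x - u m x) ≤ L ^ m * ((1-L)⁻¹ * (((2:ℝ) ^ β)⁻¹ * ψ x x)) := by
    intro x m n hmn
    obtain ⟨d, rfl⟩ := Nat.exists_eq_add_of_le hmn
    refine (hdiff m d x).trans ?_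
    have := mul_le_mul_of_nonneg_right (hgeom m d) (Bnn x)
    calc (∑ i ∈ Finset.range d, L ^ (m+i)) * (((2:ℝ) ^ β)⁻¹ * ψ x x)
        ≤ (L ^ m * (1-L)⁻¹) * (((2:ℝ) ^ β)⁻¹ * ψ x x) := this
      _ = L ^ m * ((1-L)⁻¹ * (((2:ℝ) ^ β)⁻¹ * ψ x x)) := by ring
  have htendC : ∀ C : ℝ, Filter.Tendsto (fun m => L ^ m * C) Filter.atTop (nhds 0) := by
    intro C
    simpa using (tendsto_pow_atTop_nhds_zero_of_lt_one hL0 hL1).mul_const C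
  have hC : ∀ x : E, ∀ ε : ℝ, 0 < ε → ∃ N, ∀ m ≥ N, ∀ n ≥ N,
      Nb (u m x - u n x) < ε := by
    intro x ε hε
    set Cx := (1-L)⁻¹ * (((2:ℝ) ^ β)⁻¹ * ψ x x) with hCx
    have hev : ∀ᶠ m in Filter.atTop, L ^ m * Cx < ε :=
      (htendC Cx).eventually_lt_const hε
    rw [Filter.eventually_atTop] at hev
    obtain ⟨N, hN⟩ := hev
    refine ⟨N, fun m hm n hn => ?_⟩
    rcases le_total n m with hnm | hmn
    · exact lt_of_le_of_lt (hbnd x n m hnm) (hN n hn)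
    · have e : Nb (u m x - u n x) = Nb (u n x - u m x) := by
        rw [← Nbneg (u n x - u m x)]; congr 1; abel
      rw [e]
      exact lt_of_le_of_lt (hbnd x m n hmn) (hN m hm)
  have hlim : ∀ x : E, ∃ l : F, ∀ ε : ℝ, 0 < ε → ∃ N, ∀ n ≥ N, Nb (u n x - l) < ε :=
    fun x => hcomp (fun n => u n x) (hC x)
  choose q hq using hlim
  have hHq : ∀ x : E, Nb (H x - q x) ≤ (1-L)⁻¹ * (((2:ℝ) ^ β)⁻¹ * ψ x x) := by
    intro x
    refine le_of_forall_pos_le_add ?_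
    intro ε hε
    obtain ⟨N, hN⟩ := hq x ε hε
    have h1 : Nb (H x - q x) ≤ Nb (H x - u N x) + Nb (u N x - q x) := by
      have := hNt (H x - u N x) (u N x - q x)
      simpa [sub_add_sub_cancel] using this
    have h2 : Nb (H x - u N x) ≤ (1-L)⁻¹ * (((2:ℝ) ^ β)⁻¹ * ψ x x) := by
      have e : Nb (H x - u N x) = Nb (u (0+N) x - u 0 x) := by
        rw [← Nbneg (H x - u N x)]; congr 1
        simp only [hu, Function.iterate_zero, id_eq, Nat.zero_add]
        abel
      rw [e]
      refine (hbnd x 0 (0+N) (Nat.zero_le _)).trans ?_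
      simp
    have h3 := hN N le_rfl
    linarith
  have hDun : ∀ n (x y : E), Nb (D (u n) x y) ≤ L ^ n * ψ x y := by
    intro n
    induction n with
    | zero =>
      intro x y
      have e : u 0 = H := by simp [hu]
      rw [e, pow_zero, one_mul]
      exact hDH x y
    | succ n ih =>
      intro x y
      have e : D (u (n+1)) x y = D (T (u n)) x y := by
        simp only [hu, Function.iterate_succ_apply']
      rw [e]
      calc Nb (D (T (u n)) x y) ≤ L * L ^ n * ψ x y :=
            Dcontr (u n) (L ^ n) (pow_nonneg hL0 n) ih x y
        _ = L ^ (n+1) * ψ x y := by ring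
  have hqeq : ∀ x y : E, D q x y = 0 := by
    intro x y
    have key : ∀ ε : ℝ, 0 < ε → Nb (D q x y) < ε := by
      intro ε hε
      set A : ℝ := (c ^ β)⁻¹ * c + 2 with hA
      have hA0 : 0 < A := by positivity
      set δ : ℝ := ε / (2 * A) with hδdef
      have hδ : 0 < δ := by positivity
      set Nz : E → ℕ := fun z => (hq z δ hδ).choose with hNzdef
      have hNz : ∀ z : E, ∀ n ≥ Nz z, Nb (u n z - q z) < δ :=
        fun z => (hq z δ hδ).choose_spec
      have hev : ∀ᶠ m in Filter.atTop, L ^ m * ψ x y < ε/2 :=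
        (htendC (ψ x y)).eventually_lt_const (by positivity)
      rw [Filter.eventually_atTop] at hev
      obtain ⟨M, hM⟩ := hev
      set n : ℕ := max M (max (max (Nz x) (Nz y))
        (Finset.univ.sup fun k : K => Nz (x + k • y))) with hn
      have hnM : M ≤ n := le_max_left _ _
      have hnx : Nz x ≤ n := le_trans (le_max_left _ _)
        (le_trans (le_max_left _ _) (le_max_right _ _))
      have hny : Nz y ≤ n := le_trans (le_max_right _ _)
        (le_trans (le_max_left _ _) (le_max_right _ _))
      have hnk : ∀ k : K, Nz (x + k • y) ≤ n := by
        intro k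
        have hs1 : Nz (x + k • y) ≤ Finset.univ.sup fun k : K => Nz (x + k • y) :=
          Finset.le_sup (f := fun k : K => Nz (x + k • y)) (Finset.mem_univ k)
        exact hs1.trans (le_trans (le_max_right _ _) (le_max_right _ _))
      have hsplit : D q x y = (D q x y - D (u n) x y) + D (u n) x y := by abel
      have h1 : Nb (D q x y) ≤ Nb (D q x y - D (u n) x y) + Nb (D (u n) x y) := by
        conv_lhs => rw [hsplit]
        exact hNt _ _
      have h2 : Nb (D (u n) x y) < ε/2 :=
        lt_of_le_of_lt (hDun n x y) (hM n hnM)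
      have hdec : D q x y - D (u n) x y
          = c⁻¹ • (∑ k : K, (q (x + k • y) - u n (x + k • y)))
            - (q x - u n x) - (q y - u n y) := by
        simp only [hD, Finset.sum_sub_distrib, smul_sub]
        abel
      have h3 : Nb (D q x y - D (u n) x y) ≤ (c ^ β)⁻¹ * (c * δ) + δ + δ := by
        rw [hdec]
        refine (Nbsub3 _ _ _).trans ?_
        have ha : Nb (c⁻¹ • (∑ k : K, (q (x + k • y) - u n (x + k • y))))
            ≤ (c ^ β)⁻¹ * (c * δ) := by
          rw [NbsmulNN _ (inv_nonneg.mpr hc0.le), Real.inv_rpow hc0.le]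
          refine mul_le_mul_of_nonneg_left ?_ (inv_nonneg.mpr hcβ0.le)
          refine (Nbsum _).trans ?_
          have : ∀ k : K, Nb (q (x + k • y) - u n (x + k • y)) ≤ δ := by
            intro k
            have e : Nb (q (x + k • y) - u n (x + k • y))
                = Nb (u n (x + k • y) - q (x + k • y)) := by
              rw [← Nbneg (u n (x + k • y) - q (x + k • y))]; congr 1; abel
            rw [e]
            exact le_of_lt (hNz _ n (hnk k))
          refine (Finset.sum_le_sum fun k _ => this k).trans ?_
          rw [Finset.sum_const, Finset.card_univ, nsmul_eq_mul, hc]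
        have hb : Nb (q x - u n x) ≤ δ := by
          have e : Nb (q x - u n x) = Nb (u n x - q x) := by
            rw [← Nbneg (u n x - q x)]; congr 1; abel
          rw [e]; exact le_of_lt (hNz x n hnx)
        have hcc : Nb (q y - u n y) ≤ δ := by
          have e : Nb (q y - u n y) = Nb (u n y - q y) := by
            rw [← Nbneg (u n y - q y)]; congr 1; abel
          rw [e]; exact le_of_lt (hNz y n hny)
        linarith
      have hAδ : (c ^ β)⁻¹ * (c * δ) + δ + δ = ε/2 := by
        have e : (c ^ β)⁻¹ * (c * δ) + δ + δ = A * δ := by rw [hA]; ring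
        rw [e, hδdef, mul_div_assoc']
        rw [mul_comm, mul_comm 2 A, ← div_div]
        rw [mul_div_assoc, div_self hA0.ne', mul_one]
      calc Nb (D q x y) ≤ Nb (D q x y - D (u n) x y) + Nb (D (u n) x y) := h1
        _ < ((c ^ β)⁻¹ * (c * δ) + δ + δ) + ε/2 := by linarith
        _ = ε := by rw [hAδ]; ring
    have h0 : Nb (D q x y) ≤ 0 := by
      by_contra hcon
      push_neg at hcon
      exact lt_irrefl _ (key _ hcon)
    exact (hN0 _).mp (le_antisymm h0 (hNnn _))
  refine ⟨q, ?_, ?_⟩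
  · intro x y
    have := hqeq x y
    simp only [hD] at this
    rw [sub_sub, sub_eq_zero] at this
    exact this
  · intro x
    have h1 : Nb (h x - q x - h 0) ≤ Nb (h x - h 0 - H x) + Nb (H x - q x) := by
      have e : h x - q x - h 0 = (h x - h 0 - H x) + (H x - q x) := by abel
      rw [e]; exact hNt _ _
    have h2 := hhH x
    have h3 := hHq x
    have e2 : 1 / 2 ^ β * (1 / (1 - L)) * ψ x x
        = (1-L)⁻¹ * (((2:ℝ) ^ β)⁻¹ * ψ x x) := by
      rw [one_div, one_div]; ring
    rw [e2]
    linarith
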